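/- Let B₁, B₂ be random variables on a space B with d_TV(B₁,B₂) ≤ δ, and let A: B → M be a (possibly randomized) map into a finite set M, applied with the same randomness mechanism to both. Then |I(A(B₁);B₁) − I(A(B₂);B₂)| ≤ 4δ·log(|M|/δ). -/

import Mathlib

open scoped BigOperators

/-- `p` is a probability mass function. -/
def IsPMF {M : Type*} [Fintype M] (p : M → ℝ) : Prop :=
  (∀ y, 0 ≤ p y) ∧ ∑ y, p y = 1

/-- Total variation distance between two pmfs on a finite set. -/
noncomputable def tvDist {M : Type*} [Fintype M] (p q : M → ℝ) : ℝ :=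
  (∑ y, |p y - q y|) / 2

/-- Mutual information of a joint pmf on a product of finite sets (natural log). -/
noncomputable def miPMF {A M : Type*} [Fintype A] [Fintype M] (j : A × M → ℝ) : ℝ :=
  ∑ a, ∑ m, j (a, m) *
    Real.log (j (a, m) / ((∑ m', j (a, m')) * (∑ a', j (a', m))))


open Real

lemma aux1 (x t : ℝ) (hx : 0 ≤ x) (ht : 0 ≤ t) :
    negMulLog (x + t) - negMulLog x ≤ negMulLog t := by
  simp only [negMulLog]
  have h1 : x * log x ≤ x * log (x + t) := by
    rcases eq_or_lt_of_le hx with h | h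
    · simp [← h]
    · exact mul_le_mul_of_nonneg_left (Real.log_le_log h (by linarith)) hx
  have h2 : t * log t ≤ t * log (x + t) := by
    rcases eq_or_lt_of_le ht with h | h
    · simp [← h]
    · exact mul_le_mul_of_nonneg_left (Real.log_le_log h (by linarith)) ht
  nlinarith

lemma aux2 (x t : ℝ) (hx : 0 ≤ x) (ht : 0 ≤ t) (hxt : x + t ≤ 1) :
    negMulLog x - negMulLog (x + t) ≤ t := by
  simp only [negMulLog]
  rcases eq_or_lt_of_le hx with h | hx
  · subst h
    simp only [zero_add, log_zero, mul_zero, neg_zero, neg_mul, zero_sub, neg_le]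
    have := mul_log_nonpos ht (by linarith)
    linarith
  rcases eq_or_lt_of_le ht with h | ht
  · simp [← h]
  have h1 : log (x + t) - log x ≤ t / x := by
    have := Real.log_le_sub_one_of_pos (x := (x + t)/x) (by positivity)
    rw [Real.log_div (by linarith) (ne_of_gt hx)] at this
    have : (x+t)/x - 1 = t / x := by field_simp; ring
    linarith [Real.log_le_sub_one_of_pos (x := (x + t)/x) (by positivity),
      Real.log_div (ne_of_gt (by linarith : (0:ℝ) < x + t)) (ne_of_gt hx)]
  have h2 : log (x + t) ≤ 0 := Real.log_nonpos (by linarith) hxt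
  have h3 : x * (log (x+t) - log x) ≤ x * (t / x) := mul_le_mul_of_nonneg_left h1 (le_of_lt hx)
  have h4 : x * (t / x) = t := by field_simp
  nlinarith

lemma lemA (x y : ℝ) (hx0 : 0 ≤ x) (hx1 : x ≤ 1) (hy0 : 0 ≤ y) (hy1 : y ≤ 1) :
    |negMulLog x - negMulLog y| ≤ negMulLog |x - y| + |x - y| := by
  have key : ∀ a b : ℝ, 0 ≤ a → a ≤ b → b ≤ 1 →
      |negMulLog a - negMulLog b| ≤ negMulLog (b - a) + (b - a) := by
    intro a b ha hab hb1
    have h1 := aux1 a (b - a) ha (by linarith)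
    have h2 := aux2 a (b - a) ha (by linarith) (by linarith)
    rw [show a + (b - a) = b by ring] at h1 h2
    have hg := negMulLog_nonneg (by linarith : (0:ℝ) ≤ b - a) (by linarith)
    rw [abs_le]
    constructor <;> linarith
  rcases le_total x y with h | h
  · rw [show |x - y| = y - x by rw [abs_sub_comm]; exact abs_of_nonneg (by linarith)]
    exact key x y hx0 h hy1
  · rw [show |x - y| = x - y from abs_of_nonneg (by linarith)]
    rw [abs_sub_comm]
    exact key y x hy0 h hx1

lemma jensen_sum {ι : Type*} [Fintype ι] [Nonempty ι] (ε : ι → ℝ) (hε : ∀ i, 0 ≤ ε i) :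
    ∑ i, negMulLog (ε i) ≤ (∑ i, ε i) * Real.log (Fintype.card ι) + negMulLog (∑ i, ε i) := by
  set n : ℝ := (Fintype.card ι : ℝ) with hn
  have hn0 : 0 < n := by
    simp only [hn, Nat.cast_pos, Fintype.card_pos]
  have hj := Real.concaveOn_negMulLog.le_map_sum (t := Finset.univ)
    (w := fun _ : ι => 1 / n) (p := ε)
    (fun i _ => by positivity)
    (by simp [Finset.sum_const, hn])
    (fun i _ => hε i)
  simp only [smul_eq_mul, ← Finset.mul_sum] at hj
  have hmul : negMulLog (1 / n * ∑ i, ε i) =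
      (1 / n) * ((∑ i, ε i) * Real.log n + negMulLog (∑ i, ε i)) := by
    rw [show (1:ℝ)/n * ∑ i, ε i = (∑ i, ε i) * (1/n) by ring, negMulLog_mul]
    have : negMulLog (1 / n) = (1/n) * Real.log n := by
      simp only [negMulLog, one_div, Real.log_inv]; ring
    rw [this]; ring
  rw [hmul] at hj
  calc ∑ i, negMulLog (ε i) = n * ((1/n) * ∑ i, negMulLog (ε i)) := by field_simp
    _ ≤ n * ((1 / n) * ((∑ i, ε i) * Real.log n + negMulLog (∑ i, ε i))) := by
        apply mul_le_mul_of_nonneg_left _ (le_of_lt hn0)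
        exact hj
    _ = (∑ i, ε i) * Real.log n + negMulLog (∑ i, ε i) := by field_simp

lemma mi_eq {B Mc : Type*} [Fintype B] [Fintype Mc]
    (β : B → ℝ) (hβ : IsPMF β) (κ : B → Mc → ℝ) (hκ : ∀ b, IsPMF (κ b)) :
    miPMF (fun bm : B × Mc => β bm.1 * κ bm.1 bm.2)
      = (∑ m, Real.negMulLog (∑ b, β b * κ b m))
        - ∑ b, β b * ∑ m, Real.negMulLog (κ b m) := by
  have hent : ∀ a m, β a * κ a m *
        Real.log (β a * κ a m / ((∑ m', β a * κ a m') * (∑ a', β a' * κ a' m)))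
      = β a * (κ a m * Real.log (κ a m))
        - (β a * κ a m) * Real.log (∑ a', β a' * κ a' m) := by
    intro a m
    rcases eq_or_lt_of_le (hβ.1 a) with hb | hb
    · simp [← hb]
    rcases eq_or_lt_of_le ((hκ a).1 m) with hk | hk
    · simp [← hk]
    have hrow : (∑ m', β a * κ a m') = β a := by
      rw [← Finset.mul_sum, (hκ a).2, mul_one]
    have hpM : 0 < ∑ a', β a' * κ a' m := by
      apply lt_of_lt_of_le (mul_pos hb hk)
      exact Finset.single_le_sum (fun b _ => mul_nonneg (hβ.1 b) ((hκ b).1 m))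
        (Finset.mem_univ a)
    rw [hrow,
      show β a * κ a m / (β a * (∑ a', β a' * κ a' m))
          = κ a m / (∑ a', β a' * κ a' m) by
        rw [mul_div_mul_left _ _ (ne_of_gt hb)],
      Real.log_div (ne_of_gt hk) (ne_of_gt hpM)]
    ring
  simp only [miPMF]
  calc (∑ a, ∑ m, β a * κ a m *
        Real.log (β a * κ a m / ((∑ m', β a * κ a m') * (∑ a', β a' * κ a' m))))
      = ∑ a, ∑ m, (β a * (κ a m * Real.log (κ a m))
          - (β a * κ a m) * Real.log (∑ a', β a' * κ a' m)) := by
        exact Finset.sum_congr rfl fun a _ => Finset.sum_congr rfl fun m _ => hent a m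
    _ = (∑ a, β a * ∑ m, κ a m * Real.log (κ a m))
        - ∑ m, (∑ a, β a * κ a m) * Real.log (∑ a', β a' * κ a' m) := by
        simp only [Finset.sum_sub_distrib]
        congr 1
        · exact Finset.sum_congr rfl fun a _ => (Finset.mul_sum _ _ _).symm
        · rw [Finset.sum_comm]
          exact Finset.sum_congr rfl fun m _ => (Finset.sum_mul _ _ _).symm
    _ = (∑ m, Real.negMulLog (∑ b, β b * κ b m))
        - ∑ b, β b * ∑ m, Real.negMulLog (κ b m) := by
        simp only [negMulLog, neg_mul, Finset.sum_neg_distrib, mul_neg,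
          Finset.mul_sum]
        ring

lemma F_mono (L s d : ℝ) (hs0 : 0 ≤ s) (hsd : s ≤ d) (hd : 0 < d)
    (hLd : Real.log d ≤ L) :
    s * L + Real.negMulLog s + s ≤ d * L + Real.negMulLog d + d := by
  rcases eq_or_lt_of_le hs0 with h | hs
  · simp only [← h, zero_mul, negMulLog_zero, add_zero, zero_add, negMulLog, neg_mul]
    nlinarith [hd, hLd]
  · have h1 : Real.log d - Real.log s ≤ d / s - 1 := by
      have h := Real.log_le_sub_one_of_pos (x := d / s) (by positivity)
      rwa [Real.log_div (ne_of_gt hd) (ne_of_gt hs)] at h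
    have h2 : s * (Real.log d - Real.log s) ≤ d - s := by
      have h := mul_le_mul_of_nonneg_left h1 (le_of_lt hs)
      have he : s * (d / s - 1) = d - s := by field_simp
      linarith [he ▸ h]
    have h4 : 0 ≤ (d - s) * (L - Real.log d) :=
      mul_nonneg (by linarith) (by linarith)
    simp only [negMulLog, neg_mul]
    nlinarith [h2, h4]

/-- If `B₁, B₂` are random variables (pmfs `β₁, β₂` on a finite `B`) with
`d_TV(B₁,B₂) ≤ δ`, and `A : B → M` is a randomized map (a Markov kernel `κ` into a finite `M`)
applied with the same randomness mechanism to both, then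
`|I(A(B₁);B₁) − I(A(B₂);B₂)| ≤ 4δ·log(|M|/δ)`. -/
theorem mi_diff_le_of_tv {B Mc : Type*} [Fintype B] [Fintype Mc]
    (β₁ β₂ : B → ℝ) (hβ₁ : IsPMF β₁) (hβ₂ : IsPMF β₂)
    (κ : B → Mc → ℝ) (hκ : ∀ b, IsPMF (κ b))
    (δ : ℝ) (hδ : δ ∈ Set.Ioo (0:ℝ) 1) (htv : tvDist β₁ β₂ ≤ δ) :
    |miPMF (fun bm : B × Mc => β₁ bm.1 * κ bm.1 bm.2)
      - miPMF (fun bm : B × Mc => β₂ bm.1 * κ bm.1 bm.2)|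
      ≤ 4 * δ * Real.log ((Fintype.card Mc : ℝ) / δ) := by
  obtain ⟨hδ0, hδ1⟩ := hδ
  have hBne : Nonempty B := by
    by_contra h
    rw [not_nonempty_iff] at h
    have h2 := hβ₁.2
    rw [Finset.univ_eq_empty, Finset.sum_empty] at h2
    norm_num at h2
  have hMne : Nonempty Mc := by
    by_contra h
    rw [not_nonempty_iff] at h
    have h2 := (hκ (Classical.arbitrary B)).2
    rw [Finset.univ_eq_empty, Finset.sum_empty] at h2
    norm_num at h2
  rw [mi_eq β₁ hβ₁ κ hκ, mi_eq β₂ hβ₂ κ hκ]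
  have hcard1 : 1 ≤ Fintype.card Mc := Fintype.card_pos
  have hs2δ : ∑ b, |β₁ b - β₂ b| ≤ 2 * δ := by
    simp only [tvDist] at htv; linarith
  rcases Nat.lt_or_ge (Fintype.card Mc) 2 with hc | hc
  · -- card = 1 : everything is trivial
    have hc1 : Fintype.card Mc = 1 := le_antisymm (by omega) hcard1
    obtain ⟨m0, hm0⟩ := Fintype.card_eq_one_iff.mp hc1
    have huniv : (Finset.univ : Finset Mc) = {m0} := by
      ext x; simp [hm0 x]
    have hκ1 : ∀ b, κ b m0 = 1 := fun b => by
      have h2 := (hκ b).2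
      rwa [huniv, Finset.sum_singleton] at h2
    have hLHS0 : ∀ (β : B → ℝ), IsPMF β →
        (∑ m, Real.negMulLog (∑ b, β b * κ b m))
          - ∑ b, β b * ∑ m, Real.negMulLog (κ b m) = 0 := by
      intro β hβ
      rw [huniv]
      simp [hκ1, hβ.2]
    rw [hLHS0 β₁ hβ₁, hLHS0 β₂ hβ₂, sub_zero, abs_zero]
    apply mul_nonneg (by linarith)
    apply Real.log_nonneg
    rw [hc1]
    rw [le_div_iff₀ hδ0]
    norm_num; linarith
  · -- main case : card ≥ 2
    set n : ℝ := (Fintype.card Mc : ℝ) with hn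
    set L : ℝ := Real.log n with hLdef
    have hn2 : (2:ℝ) ≤ n := by simp only [hn]; exact_mod_cast hc
    have hL2 : Real.log 2 ≤ L := Real.log_le_log (by norm_num) hn2
    have hL0 : 0 ≤ L := le_trans (Real.log_nonneg (by norm_num)) hL2
    -- basic facts about κ
    have hκle1 : ∀ b m, κ b m ≤ 1 := fun b m => by
      calc κ b m ≤ ∑ m', κ b m' :=
            Finset.single_le_sum (fun m' _ => (hκ b).1 m') (Finset.mem_univ m)
        _ = 1 := (hκ b).2
    have hE0 : ∀ b, 0 ≤ ∑ m, Real.negMulLog (κ b m) := fun b =>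
      Finset.sum_nonneg fun m _ => negMulLog_nonneg ((hκ b).1 m) (hκle1 b m)
    have hEL : ∀ b, ∑ m, Real.negMulLog (κ b m) ≤ L := fun b => by
      have h := jensen_sum (κ b) ((hκ b).1)
      rw [(hκ b).2] at h
      simpa using h
    -- marginal bounds
    have hp0 : ∀ (β : B → ℝ), IsPMF β → ∀ m, 0 ≤ ∑ b, β b * κ b m := fun β hβ m =>
      Finset.sum_nonneg fun b _ => mul_nonneg (hβ.1 b) ((hκ b).1 m)
    have hp1 : ∀ (β : B → ℝ), IsPMF β → ∀ m, (∑ b, β b * κ b m) ≤ 1 := fun β hβ m => by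
      calc (∑ b, β b * κ b m) ≤ ∑ b, β b := Finset.sum_le_sum fun b _ => by
            nlinarith [hβ.1 b, hκle1 b m, (hκ b).1 m]
        _ = 1 := hβ.2
    -- TV of marginals
    have hεle : ∀ m, |(∑ b, β₁ b * κ b m) - (∑ b, β₂ b * κ b m)|
        ≤ ∑ b, |β₁ b - β₂ b| * κ b m := fun m => by
      rw [← Finset.sum_sub_distrib]
      calc |∑ b, (β₁ b * κ b m - β₂ b * κ b m)|
          ≤ ∑ b, |β₁ b * κ b m - β₂ b * κ b m| := Finset.abs_sum_le_sum_abs _ _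
        _ = ∑ b, |β₁ b - β₂ b| * κ b m := Finset.sum_congr rfl fun b _ => by
            rw [← sub_mul, abs_mul, abs_of_nonneg ((hκ b).1 m)]
    have hsle : (∑ m, |(∑ b, β₁ b * κ b m) - (∑ b, β₂ b * κ b m)|) ≤ 2 * δ := by
      calc (∑ m, |(∑ b, β₁ b * κ b m) - (∑ b, β₂ b * κ b m)|)
          ≤ ∑ m, ∑ b, |β₁ b - β₂ b| * κ b m := Finset.sum_le_sum fun m _ => hεle m
        _ = ∑ b, |β₁ b - β₂ b| := by
            rw [Finset.sum_comm]
            exact Finset.sum_congr rfl fun b _ => by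
              rw [← Finset.mul_sum, (hκ b).2, mul_one]
        _ ≤ 2 * δ := hs2δ
    set s : ℝ := ∑ m, |(∑ b, β₁ b * κ b m) - (∑ b, β₂ b * κ b m)| with hsdef
    have hs0 : 0 ≤ s := Finset.sum_nonneg fun m _ => abs_nonneg _
    -- entropy difference bound
    have hHd : |(∑ m, Real.negMulLog (∑ b, β₁ b * κ b m))
        - ∑ m, Real.negMulLog (∑ b, β₂ b * κ b m)|
        ≤ 2 * δ * L + Real.negMulLog (2 * δ) + 2 * δ := by
      have step1 : |(∑ m, Real.negMulLog (∑ b, β₁ b * κ b m))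
          - ∑ m, Real.negMulLog (∑ b, β₂ b * κ b m)|
          ≤ (∑ m, Real.negMulLog |(∑ b, β₁ b * κ b m) - (∑ b, β₂ b * κ b m)|) + s := by
        rw [← Finset.sum_sub_distrib, hsdef, ← Finset.sum_add_distrib]
        refine le_trans (Finset.abs_sum_le_sum_abs _ _) (Finset.sum_le_sum fun m _ => ?_)
        exact lemA _ _ (hp0 β₁ hβ₁ m) (hp1 β₁ hβ₁ m) (hp0 β₂ hβ₂ m) (hp1 β₂ hβ₂ m)
      have step2 : (∑ m, Real.negMulLog |(∑ b, β₁ b * κ b m) - (∑ b, β₂ b * κ b m)|)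
          ≤ s * L + Real.negMulLog s :=
        jensen_sum _ (fun m => abs_nonneg _)
      have step3 : s * L + Real.negMulLog s + s
          ≤ 2 * δ * L + Real.negMulLog (2 * δ) + 2 * δ := by
        apply F_mono L s (2 * δ) hs0 hsle (by linarith)
        calc Real.log (2 * δ) ≤ Real.log 2 := by
              apply Real.log_le_log (by linarith); linarith
          _ ≤ L := hL2
      linarith
    -- second term bound
    have hsum0 : ∑ b, (β₁ b - β₂ b) = 0 := by
      rw [Finset.sum_sub_distrib, hβ₁.2, hβ₂.2]; ring
    have ht2 : |∑ b, (β₁ b - β₂ b) * (∑ m, Real.negMulLog (κ b m))| ≤ δ * L := by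
      have hre : ∑ b, (β₁ b - β₂ b) * (∑ m, Real.negMulLog (κ b m))
          = ∑ b, (β₁ b - β₂ b) * ((∑ m, Real.negMulLog (κ b m)) - L / 2) := by
        simp only [mul_sub, Finset.sum_sub_distrib, ← Finset.sum_mul, hsum0, zero_mul,
          sub_zero]
      rw [hre]
      calc |∑ b, (β₁ b - β₂ b) * ((∑ m, Real.negMulLog (κ b m)) - L / 2)|
          ≤ ∑ b, |β₁ b - β₂ b| * (L / 2) := by
            refine le_trans (Finset.abs_sum_le_sum_abs _ _)
              (Finset.sum_le_sum fun b _ => ?_)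
            rw [abs_mul]
            refine mul_le_mul_of_nonneg_left ?_ (abs_nonneg _)
            rw [abs_le]
            constructor <;> [linarith [hE0 b]; linarith [hEL b]]
        _ = (∑ b, |β₁ b - β₂ b|) * (L / 2) := (Finset.sum_mul _ _ _).symm
        _ ≤ 2 * δ * (L / 2) := mul_le_mul_of_nonneg_right hs2δ (by linarith)
        _ = δ * L := by ring
    -- combine
    have hT : (∑ b, β₁ b * ∑ m, Real.negMulLog (κ b m))
        - (∑ b, β₂ b * ∑ m, Real.negMulLog (κ b m))
        = ∑ b, (β₁ b - β₂ b) * (∑ m, Real.negMulLog (κ b m)) := by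
      rw [← Finset.sum_sub_distrib]
      exact Finset.sum_congr rfl fun b _ => (sub_mul _ _ _).symm
    have hRHS : 4 * δ * Real.log (n / δ) = 4 * δ * L - 4 * δ * Real.log δ := by
      rw [Real.log_div (by linarith) (ne_of_gt hδ0)]; ring
    have hnm : Real.negMulLog (2 * δ) = -(2 * δ) * (Real.log 2 + Real.log δ) := by
      rw [negMulLog, Real.log_mul (by norm_num) (ne_of_gt hδ0)]
    have hlogδ : Real.log δ ≤ 0 := Real.log_nonpos (le_of_lt hδ0) (le_of_lt hδ1)
    have hlog2 : (0.6931471803 : ℝ) < Real.log 2 := Real.log_two_gt_d9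
    calc |((∑ m, Real.negMulLog (∑ b, β₁ b * κ b m))
            - ∑ b, β₁ b * ∑ m, Real.negMulLog (κ b m))
          - ((∑ m, Real.negMulLog (∑ b, β₂ b * κ b m))
            - ∑ b, β₂ b * ∑ m, Real.negMulLog (κ b m))|
        = |((∑ m, Real.negMulLog (∑ b, β₁ b * κ b m))
            - ∑ m, Real.negMulLog (∑ b, β₂ b * κ b m))
          - ∑ b, (β₁ b - β₂ b) * (∑ m, Real.negMulLog (κ b m))| := by
          rw [← hT]; ring_nf
      _ ≤ |(∑ m, Real.negMulLog (∑ b, β₁ b * κ b m))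
            - ∑ m, Real.negMulLog (∑ b, β₂ b * κ b m)|
          + |∑ b, (β₁ b - β₂ b) * (∑ m, Real.negMulLog (κ b m))| := abs_sub _ _
      _ ≤ (2 * δ * L + Real.negMulLog (2 * δ) + 2 * δ) + δ * L := add_le_add hHd ht2
      _ ≤ 4 * δ * Real.log (n / δ) := by
          rw [hRHS, hnm]
          nlinarith [hlog2, hlogδ, hL2, hδ0]
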